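/- Let N ≥ 2, let A be an N×N complex matrix with τ = tr A, let v ∈ ℂ^N be a unit vector with α = ⟨v, A v⟩, and assume τ ≠ 0, α ≠ 0 and Nα ≠ τ. Then the partial trace of the Choi matrix Z_A = (1/α)·A ⊗ P + (1/(N/τ − 1/α))·(𝟙 − A/α) ⊗ (𝟙/τ − P/α) over the second tensor factor equals the identity: for all indices i, j ∈ {1, …, N}, ∑_{k=1}^{N} Z_A[(i,k),(j,k)] = δ_{ij}. -/

import Mathlib

open Matrix Kronecker

/-- The partial trace over the second tensor factor of the Choi matrix
`Z_A = (1/α)·A ⊗ P + (1/(N/τ − 1/α))·(𝟙 − A/α) ⊗ (𝟙/τ − P/α)` is the identity: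
`∑ₖ Z_A[(i,k),(j,k)] = δ_{ij}`. -/
theorem choi_partialTrace_unital (N : ℕ) (hN : 2 ≤ N)
    (A : Matrix (Fin N) (Fin N) ℂ)
    (v : Fin N → ℂ) (hv : star v ⬝ᵥ v = 1)
    (τ α : ℂ) (hτ : A.trace = τ) (hα : star v ⬝ᵥ A.mulVec v = α)
    (hτ0 : τ ≠ 0) (hα0 : α ≠ 0) (hNα : (N : ℂ) * α ≠ τ)
    (P : Matrix (Fin N) (Fin N) ℂ) (hP : P = vecMulVec (star v) v)
    (Z : Matrix (Fin N × Fin N) (Fin N × Fin N) ℂ)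
    (hZ : Z = α⁻¹ • (A ⊗ₖ P) +
      ((N : ℂ) / τ - 1 / α)⁻¹ •
        ((1 - α⁻¹ • A) ⊗ₖ (τ⁻¹ • 1 - α⁻¹ • P))) :
    ∀ i j : Fin N, ∑ k : Fin N, Z (i, k) (j, k) = (1 : Matrix (Fin N) (Fin N) ℂ) i j := by
  intro i j
  have hc : ((N : ℂ) / τ - 1 / α) ≠ 0 := by
    rw [sub_ne_zero]
    intro h
    apply hNα
    field_simp at h
    linear_combination h
  have hPtr : (∑ k, vecMulVec (star v) v k k) = 1 := by
    simpa [vecMulVec_apply, dotProduct] using hv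
  subst hZ hP
  simp only [Matrix.add_apply, Matrix.smul_apply, kroneckerMap_apply, Matrix.sub_apply, smul_eq_mul,
    Matrix.one_apply]
  rw [Finset.sum_add_distrib]
  rw [← Finset.mul_sum, ← Finset.mul_sum]
  rw [← Finset.mul_sum]
  have h2 : ∑ k : Fin N, ((τ⁻¹ * if True then 1 else (0:ℂ)) - α⁻¹ * Matrix.vecMulVec (star v) v k k)
      = (N : ℂ) / τ - 1 / α := by
    rw [Finset.sum_sub_distrib, ← Finset.mul_sum, ← Finset.mul_sum, hPtr]
    simp [Finset.card_fin]
    ring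
  rw [← Finset.mul_sum, hPtr, h2, mul_comm (((N : ℂ) / τ - 1 / α)⁻¹), mul_assoc, mul_inv_cancel₀ hc]
  split <;> field_simp <;> ring
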